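/- Let R be a commutative ring and 𝓡 a filtration of R such that the filtrations induced by 𝓡 on all submodules and quotient modules of R are good. Let M be a finitely generated R-module and 𝓜 an 𝓡-filtration of M such that the filtrations induced by 𝓜 on all submodules and quotient modules of M are good. Provide the annihilator (0:M) of M in R with its induced 𝓡-filtration, denoted (0:𝓜). Then √(Gr(0:𝓜)) = √(0 : Gr𝓜) as ideals of the commutative ring Gr𝓡. -/

import Mathlib

namespace FilteredPaper

variable {R : Type} [Ring R]

/-- `F` is a filtration of the ring `R`. -/
structure IsRingFiltration (F : ℤ → AddSubgroup R) : Prop where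
  exhaustive : ∀ r : R, ∃ i, r ∈ F i
  mono : ∀ i : ℤ, F (i - 1) ≤ F i
  mul_mem : ∀ {i j : ℤ} {r s : R}, r ∈ F i → s ∈ F j → r * s ∈ F (i + j)
  bot : ∀ i < 0, F i = ⊥
  one_mem : (1 : R) ∈ F 0

/-- `FM` is an `F`-filtration of the left `R`-module `M`. -/
structure IsModuleFiltration (F : ℤ → AddSubgroup R) {M : Type} [AddCommGroup M]
    [Module R M] (FM : ℤ → AddSubgroup M) : Prop where
  exhaustive : ∀ m : M, ∃ i, m ∈ FM i
  mono : ∀ i : ℤ, FM (i - 1) ≤ FM i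
  smul_mem : ∀ {i j : ℤ} {r : R} {m : M}, r ∈ F i → m ∈ FM j → r • m ∈ FM (i + j)

/-- A realization of the associated graded ring `Gr𝓡 = ⊕ᵢ Fᵢ/Fᵢ₋₁` of the filtered ring
`(R,F)` as a ring `A`: the map `emb i` sends `x ∈ Fᵢ` to its symbol
`σᵢ(x) = x + Fᵢ₋₁ ∈ Grᵢ𝓡 ⊆ A`; it is additive with kernel `Fᵢ₋₁`, the symbol maps are
multiplicative, and `A` is the internal direct sum of the images. -/
structure GrRingReal (F : ℤ → AddSubgroup R) (A : Type) [Ring A] where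
  emb : ∀ i : ℤ, F i →+ A
  emb_eq_zero_iff : ∀ (i : ℤ) (x : F i), emb i x = 0 ↔ (x : R) ∈ F (i - 1)
  emb_mul : ∀ (i j : ℤ) (x : F i) (y : F j) (h : (x : R) * (y : R) ∈ F (i + j)),
      emb i x * emb j y = emb (i + j) ⟨(x : R) * y, h⟩
  emb_one : ∀ h : (1 : R) ∈ F 0, emb 0 ⟨1, h⟩ = 1
  internal : DirectSum.IsInternal fun i : ℤ => (emb i).range

/-- A realization of the associated graded module `Gr𝓜 = ⊕ᵢ FMᵢ/FMᵢ₋₁` of a filtered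
left `R`-module `(M,FM)` as a left module `G` over (a realization `A` of) `Gr𝓡`. -/
structure GrModuleReal (F : ℤ → AddSubgroup R) {M : Type} [AddCommGroup M] [Module R M]
    (FM : ℤ → AddSubgroup M) {A : Type} [Ring A] (re : GrRingReal F A)
    (G : Type) [AddCommGroup G] [Module A G] where
  emb : ∀ i : ℤ, FM i →+ G
  emb_eq_zero_iff : ∀ (i : ℤ) (x : FM i), emb i x = 0 ↔ (x : M) ∈ FM (i - 1)
  emb_smul : ∀ (i j : ℤ) (r : F i) (m : FM j) (h : (r : R) • (m : M) ∈ FM (i + j)),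
      re.emb i r • emb j m = emb (i + j) ⟨(r : R) • (m : M), h⟩
  internal : DirectSum.IsInternal fun i : ℤ => (emb i).range

/-- The ideal `Gr𝓢` of (the realization `A` of) `Gr𝓡` determined by a subset `S ⊆ R`
carrying the induced filtration `Fᵢ ∩ S`: it is generated (indeed spanned) by the
symbols of the elements of `S`. -/
def grIdealOf {F : ℤ → AddSubgroup R} {A : Type} [Ring A] (re : GrRingReal F A)
    (S : Set R) : Ideal A :=
  Ideal.span {a : A | ∃ (i : ℤ) (x : F i), (x : R) ∈ S ∧ re.emb i x = a}

/-- The induced filtration on the quotient module `M ⧸ N`. -/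
def quotFil {M : Type} [AddCommGroup M] [Module R M] (FM : ℤ → AddSubgroup M)
    (N : Submodule R M) : ℤ → AddSubgroup (M ⧸ N) :=
  fun i => (FM i).map N.mkQ.toAddMonoidHom

/-- `FM` is a good `F`-filtration of the left `R`-module `M`:
`FMᵢ = Σⱼ F_{i-pⱼ} · gⱼ` for finitely many `gⱼ ∈ M`, `pⱼ ∈ ℤ`. -/
def IsGoodFiltration (F : ℤ → AddSubgroup R) {M : Type} [AddCommGroup M] [Module R M]
    (FM : ℤ → AddSubgroup M) : Prop :=
  IsModuleFiltration F FM ∧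
  ∃ (t : ℕ) (g : Fin t → M) (p : Fin t → ℤ), ∀ i : ℤ,
    FM i = ⨆ j : Fin t, (F (i - p j)).map ((smulAddHom R M).flip (g j))

/-- The filtration induced by `FM` on a submodule `N ≤ M` is good (with the generators
`gⱼ` lying in `N`, the equality being read inside `M`). -/
def InducedGoodOn (F : ℤ → AddSubgroup R) {M : Type} [AddCommGroup M] [Module R M]
    (FM : ℤ → AddSubgroup M) (N : Submodule R M) : Prop :=
  ∃ (t : ℕ) (g : Fin t → M) (p : Fin t → ℤ), (∀ j, g j ∈ N) ∧
    ∀ i : ℤ, FM i ⊓ N.toAddSubgroup =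
      ⨆ j : Fin t, (F (i - p j)).map ((smulAddHom R M).flip (g j))

end FilteredPaper

namespace Statement9Aux

open FilteredPaper

/-- A family of additive subgroups satisfying the one-step monotonicity is monotone. -/
theorem fil_mono {X : Type} [AddCommGroup X] {K : ℤ → AddSubgroup X}
    (h : ∀ i : ℤ, K (i - 1) ≤ K i) : Monotone K := by
  intro i j hij
  refine Int.le_induction (motive := fun j _ => K i ≤ K j) le_rfl ?_ j hij
  intro k _ ih
  refine ih.trans ?_
  have := h (k + 1)
  simpa using this

theorem pow_mem_fil {R : Type} [Ring R] {F : ℤ → AddSubgroup R}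
    (hF : IsRingFiltration F) {x : R} {d : ℤ} (hx : x ∈ F d) :
    ∀ k : ℕ, x ^ k ∈ F ((k : ℤ) * d)
  | 0 => by simpa using hF.one_mem
  | (k + 1) => by
    have h1 : x ^ k * x ∈ F ((k : ℤ) * d + d) := hF.mul_mem (pow_mem_fil hF hx k) hx
    have h2 : ((k : ℤ) + 1) * d = (k : ℤ) * d + d := by ring
    rw [pow_succ]
    rw [Nat.cast_add, Nat.cast_one, h2]
    exact h1

theorem prod_mem_fil {R : Type} [CommRing R] {F : ℤ → AddSubgroup R}
    (hF : IsRingFiltration F) {e : ℤ} :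
    ∀ (t : ℕ) (v : Fin t → R), (∀ l, v l ∈ F e) → (∏ l, v l) ∈ F ((t : ℤ) * e)
  | 0, v, _ => by simpa using hF.one_mem
  | (t + 1), v, hv => by
    rw [Fin.prod_univ_succ]
    have h1 : v 0 * ∏ l : Fin t, v l.succ ∈ F (e + (t : ℤ) * e) :=
      hF.mul_mem (hv 0) (prod_mem_fil hF t (fun l => v l.succ) (fun l => hv l.succ))
    have h2 : ((t : ℕ) + 1 : ℤ) * e = e + (t : ℤ) * e := by ring
    rw [Nat.cast_add, Nat.cast_one, h2]
    exact h1

theorem prod_sub_mem_fil {R : Type} [CommRing R] {F : ℤ → AddSubgroup R}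
    (hF : IsRingFiltration F) {e : ℤ} :
    ∀ (t : ℕ) (v w : Fin t → R), (∀ l, v l ∈ F e) → (∀ l, w l ∈ F e) →
      (∀ l, v l - w l ∈ F (e - 1)) → (∏ l, v l) - (∏ l, w l) ∈ F ((t : ℤ) * e - 1)
  | 0, v, w, _, _, _ => by simpa using zero_mem _
  | (t + 1), v, w, hv, hw, hvw => by
    rw [Fin.prod_univ_succ, Fin.prod_univ_succ]
    set P : R := ∏ l : Fin t, v l.succ with hP
    set Q : R := ∏ l : Fin t, w l.succ with hQ
    have key : v 0 * P - w 0 * Q = (v 0 - w 0) * P + w 0 * (P - Q) := by ring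
    rw [key]
    have h1 : (v 0 - w 0) * P ∈ F ((e - 1) + (t : ℤ) * e) :=
      hF.mul_mem (hvw 0) (prod_mem_fil hF t (fun l => v l.succ) (fun l => hv l.succ))
    have h2 : w 0 * (P - Q) ∈ F (e + ((t : ℤ) * e - 1)) :=
      hF.mul_mem (hw 0)
        (prod_sub_mem_fil hF t (fun l => v l.succ) (fun l => w l.succ)
          (fun l => hv l.succ) (fun l => hw l.succ) (fun l => hvw l.succ))
    have h3 : ((t : ℕ) + 1 : ℤ) * e - 1 = (e - 1) + (t : ℤ) * e := by ring
    have h4 : ((t : ℕ) + 1 : ℤ) * e - 1 = e + ((t : ℤ) * e - 1) := by ring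
    rw [Nat.cast_add, Nat.cast_one]
    rw [← h3] at h1
    rw [← h4] at h2
    exact add_mem h1 h2

theorem pow_smul_mem_fil {R : Type} [CommRing R]
    {M : Type} [AddCommGroup M] [Module R M] {FM : ℤ → AddSubgroup M}
    {x : R} {d : ℤ}
    (hx : ∀ (j : ℤ) (m : M), m ∈ FM j → x • m ∈ FM (j + d - 1)) :
    ∀ (k : ℕ) (j : ℤ) (m : M), m ∈ FM j → x ^ k • m ∈ FM (j + (k : ℤ) * (d - 1))
  | 0, j, m, hm => by simpa using hm
  | (k + 1), j, m, hm => by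
    have h1 : x ^ k • m ∈ FM (j + (k : ℤ) * (d - 1)) := pow_smul_mem_fil hx k j m hm
    have h2 : x • (x ^ k • m) ∈ FM (j + (k : ℤ) * (d - 1) + d - 1) := hx _ _ h1
    have h3 : j + ((k : ℕ) + 1 : ℤ) * (d - 1) = j + (k : ℤ) * (d - 1) + d - 1 := by ring
    rw [pow_succ', mul_smul, Nat.cast_add, Nat.cast_one, h3]
    exact h2

/-- From goodness of the induced filtration on the cyclic submodule `R•m₀`, a bound `c`
such that any element of `FMⱼ ∩ R•m₀` is of the form `y • m₀` with `y ∈ F (j+c)`. -/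
theorem induced_bound {R : Type} [CommRing R] {F : ℤ → AddSubgroup R}
    (hF : IsRingFiltration F) {M : Type} [AddCommGroup M] [Module R M]
    {FM : ℤ → AddSubgroup M} (m0 : M)
    (hind : InducedGoodOn F FM (Submodule.span R {m0})) :
    ∃ c : ℕ, ∀ (j : ℤ) (m : M), m ∈ FM j → m ∈ Submodule.span R {m0} →
      ∃ y : R, y ∈ F (j + (c : ℤ)) ∧ y • m0 = m := by
  obtain ⟨t, g, p, hg, heq⟩ := hind
  choose r hr using fun l => Submodule.mem_span_singleton.mp (hg l)
  choose s hs using fun l => hF.exhaustive (r l)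
  refine ⟨Finset.univ.sup (fun l => (s l - p l).toNat), ?_⟩
  intro j m hm hmN
  set c : ℕ := Finset.univ.sup (fun l => (s l - p l).toNat) with hc
  have hm' : m ∈ ⨆ l : Fin t, (F (j - p l)).map ((smulAddHom R M).flip (g l)) := by
    rw [← heq j]
    exact AddSubgroup.mem_inf.mpr ⟨hm, hmN⟩
  refine AddSubgroup.iSup_induction (C := fun m => ∃ y : R, y ∈ F (j + (c : ℤ)) ∧ y • m0 = m)
    _ hm' ?_ ⟨0, zero_mem _, by simp⟩ ?_
  · intro l m hm
    obtain ⟨f, hf, hfm⟩ := AddSubgroup.mem_map.mp hm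
    refine ⟨f * r l, ?_, ?_⟩
    · have h1 : f * r l ∈ F (j - p l + s l) := hF.mul_mem hf (hs l)
      have h2 : (s l - p l : ℤ) ≤ ((s l - p l).toNat : ℤ) := Int.self_le_toNat _
      have h3 : ((s l - p l).toNat : ℕ) ≤ c :=
        Finset.le_sup (f := fun l => (s l - p l).toNat) (Finset.mem_univ l)
      have h4 : j - p l + s l ≤ j + (c : ℤ) := by
        have := (Nat.cast_le (α := ℤ)).mpr h3
        omega
      exact fil_mono hF.mono h4 h1
    · rw [mul_smul, hr l, ← hfm]
      simp
  · rintro a b ⟨y1, hy1, hy1'⟩ ⟨y2, hy2, hy2'⟩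
    exact ⟨y1 + y2, add_mem hy1 hy2, by rw [add_smul, hy1', hy2']⟩

set_option synthInstance.maxHeartbeats 1000000 in
/-- Extracting vanishing of components from an internal direct sum decomposition. -/
theorem internal_sum_eq_zero {G : Type} [AddCommGroup G] {H : ℤ → AddSubgroup G}
    (hint : DirectSum.IsInternal H) {ι : Type} (s : Finset ι) (κ : ι → ℤ)
    (hκ : Function.Injective κ) (f : ι → G) (hf : ∀ i, f i ∈ H (κ i))
    (hsum : ∑ i ∈ s, f i = 0) : ∀ i ∈ s, f i = 0 := by
  classical
  set w : DirectSum ℤ (fun k => H k) := ∑ i ∈ s, DirectSum.of (fun k => (H k : AddSubgroup G)) (κ i) ⟨f i, hf i⟩ with hw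
  have hcoe : DirectSum.coeAddMonoidHom H w = 0 := by
    rw [hw, map_sum]
    simpa [DirectSum.coeAddMonoidHom_of] using hsum
  have hw0 : w = 0 := hint.injective (by rw [hcoe, map_zero])
  intro i0 hi0
  have happ := DFunLike.congr_fun hw0 (κ i0)
  rw [hw, DFinsupp.finset_sum_apply] at happ
  have hsum' : ∑ a ∈ s,
      ((DirectSum.of (fun k => (H k : AddSubgroup G)) (κ a)) ⟨f a, hf a⟩) (κ i0) =
      ((DirectSum.of (fun k => (H k : AddSubgroup G)) (κ i0)) ⟨f i0, hf i0⟩) (κ i0) :=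
    Finset.sum_eq_single_of_mem i0 hi0
      (fun b _ hne => DirectSum.of_eq_of_ne _ _ _ (fun h => hne (hκ h.symm)))
  rw [hsum', DirectSum.of_eq_same, DFinsupp.zero_apply] at happ
  simpa using Subtype.ext_iff.mp happ

/-- Decomposing an element along an internal direct sum of additive subgroups. -/
theorem internal_decompose {G : Type} [AddCommGroup G] {H : ℤ → AddSubgroup G}
    (hint : DirectSum.IsInternal H) (a : G) :
    ∃ (s : Finset ℤ) (f : ℤ → G), (∀ i, f i ∈ H i) ∧ a = ∑ i ∈ s, f i := by
  classical
  obtain ⟨w, hw⟩ := hint.surjective a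
  refine ⟨w.support, fun i => (w i : G), fun i => (w i).2, ?_⟩
  rw [← hw]
  conv_lhs => rw [← DirectSum.sum_support_of w]
  rw [map_sum]
  simp [DirectSum.coeAddMonoidHom_of]

theorem emb_congr {R : Type} [Ring R] {F : ℤ → AddSubgroup R} {A : Type} [Ring A]
    (re : GrRingReal F A) {i i' : ℤ} (h : i = i') {u u' : R} (hval : u = u')
    (hu : u ∈ F i) (hu' : u' ∈ F i') :
    re.emb i ⟨u, hu⟩ = re.emb i' ⟨u', hu'⟩ := by
  subst h; subst hval; rfl

theorem emb_pow {R : Type} [Ring R] {F : ℤ → AddSubgroup R}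
    (hF : IsRingFiltration F) {A : Type} [Ring A] (re : GrRingReal F A)
    {d : ℤ} (x : F d) :
    ∀ k : ℕ, (re.emb d x) ^ k = re.emb ((k : ℤ) * d) ⟨(x : R) ^ k, pow_mem_fil hF x.2 k⟩
  | 0 => by
    rw [pow_zero]
    rw [emb_congr re (i' := 0) (u' := (1 : R)) (by simp) (by simp) _ hF.one_mem]
    exact (re.emb_one hF.one_mem).symm
  | (k + 1) => by
    rw [pow_succ, emb_pow hF re x k]
    have hm : ((x : R) ^ k) * (x : R) ∈ F ((k : ℤ) * d + d) :=
      hF.mul_mem (pow_mem_fil hF x.2 k) x.2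
    rw [re.emb_mul _ _ _ _ hm]
    exact emb_congr re (by push_cast; ring) (by rw [pow_succ]) _ _

/-- An element of `A` that kills all homogeneous elements of `G` annihilates `G`. -/
theorem ann_of_homog_killing {R : Type} [Ring R] {F : ℤ → AddSubgroup R}
    {M : Type} [AddCommGroup M] [Module R M] {FM : ℤ → AddSubgroup M}
    {A : Type} [Ring A] {re : GrRingReal F A}
    {G : Type} [AddCommGroup G] [Module A G] (reM : GrModuleReal F FM re G)
    (c : A) (hc : ∀ (j : ℤ) (m : FM j), c • reM.emb j m = 0) :
    c ∈ Module.annihilator A G := by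
  rw [Module.mem_annihilator]
  intro g
  obtain ⟨s, f, hf, rfl⟩ := internal_decompose reM.internal g
  rw [Finset.smul_sum]
  refine Finset.sum_eq_zero fun j _ => ?_
  obtain ⟨m, hm⟩ := hf j
  rw [← hm]
  exact hc j m

/-- The hard homogeneous case: a symbol `σ_d(x)` that lowers the filtration degree of
`M` by one lies in the radical of `Gr(0:M)`. -/
theorem homog_case {R : Type} [CommRing R] {F : ℤ → AddSubgroup R}
    (hF : IsRingFiltration F)
    {M : Type} [AddCommGroup M] [Module R M] [Module.Finite R M]
    {FM : ℤ → AddSubgroup M} (hFM : IsModuleFiltration F FM)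
    (hMsub : ∀ N : Submodule R M, InducedGoodOn F FM N)
    {A : Type} [CommRing A] (re : GrRingReal F A)
    {d : ℤ} (x : F d)
    (hx : ∀ (j : ℤ) (m : M), m ∈ FM j → (x : R) • m ∈ FM (j + d - 1)) :
    re.emb d x ∈ (grIdealOf re (Module.annihilator R M : Set R)).radical := by
  classical
  obtain ⟨t, mgen, hspan⟩ := Module.Finite.exists_fin (R := R) (M := M)
  choose q hq using fun l => hFM.exhaustive (mgen l)
  choose c hc using fun l => induced_bound hF (mgen l) (hMsub (Submodule.span R {mgen l}))
  set n : ℕ := 1 + Finset.univ.sup (fun l => (q l + (c l : ℤ)).toNat) with hn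
  have hnl : ∀ l, q l + (c l : ℤ) + 1 ≤ (n : ℤ) := by
    intro l
    have h1 : (q l + (c l : ℤ)).toNat ≤ Finset.univ.sup (fun l => (q l + (c l : ℤ)).toNat) :=
      Finset.le_sup (f := fun l => (q l + (c l : ℤ)).toNat) (Finset.mem_univ l)
    have h2 : q l + (c l : ℤ) ≤ ((q l + (c l : ℤ)).toNat : ℤ) := Int.self_le_toNat _
    have h3 := (Nat.cast_le (α := ℤ)).mpr h1
    omega
  -- for each generator, a witness y l
  have hwit : ∀ l, ∃ y : R, y ∈ F ((n : ℤ) * d - 1) ∧ y • mgen l = (x : R) ^ n • mgen l := by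
    intro l
    have h1 : (x : R) ^ n • mgen l ∈ FM (q l + (n : ℤ) * (d - 1)) :=
      pow_smul_mem_fil hx n (q l) (mgen l) (hq l)
    have h2 : (x : R) ^ n • mgen l ∈ Submodule.span R {mgen l} :=
      Submodule.smul_mem _ _ (Submodule.mem_span_singleton_self _)
    obtain ⟨y, hy, hy'⟩ := hc l (q l + (n : ℤ) * (d - 1)) _ h1 h2
    refine ⟨y, ?_, hy'⟩
    have h3 : q l + (n : ℤ) * (d - 1) + (c l : ℤ) ≤ (n : ℤ) * d - 1 := by
      have := hnl l
      have hexp : (n : ℤ) * (d - 1) = (n : ℤ) * d - (n : ℤ) := by ring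
      omega
    exact fil_mono hF.mono h3 hy
  choose y hyF hy using hwit
  set e : ℤ := (n : ℤ) * d with he
  have hxn : (x : R) ^ n ∈ F e := pow_mem_fil hF x.2 n
  have hwF : ∀ l, (x : R) ^ n - y l ∈ F e := fun l =>
    sub_mem hxn (fil_mono hF.mono (by omega) (hyF l))
  set z : R := ∏ l : Fin t, ((x : R) ^ n - y l) with hz
  have hzF : z ∈ F ((t : ℤ) * e) := prod_mem_fil hF t _ hwF
  have hdiff : (x : R) ^ (n * t) - z ∈ F ((t : ℤ) * e - 1) := by
    have h1 : (∏ _l : Fin t, (x : R) ^ n) - z ∈ F ((t : ℤ) * e - 1) :=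
      prod_sub_mem_fil hF t (fun _ => (x : R) ^ n) (fun l => (x : R) ^ n - y l)
        (fun _ => hxn) hwF (fun l => by simpa using hyF l)
    have h2 : (∏ _l : Fin t, (x : R) ^ n) = (x : R) ^ (n * t) := by
      rw [Finset.prod_const, Finset.card_univ, Fintype.card_fin, ← pow_mul]
    rwa [h2] at h1
  have hzann : z ∈ Module.annihilator R M := by
    rw [Module.mem_annihilator]
    intro m
    have hm : m ∈ Submodule.span R (Set.range mgen) := hspan ▸ Submodule.mem_top
    induction hm using Submodule.span_induction with
    | mem m hm =>
      obtain ⟨l, rfl⟩ := hm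
      have hfac : z = ((x : R) ^ n - y l) *
          ∏ k ∈ Finset.univ.erase l, ((x : R) ^ n - y k) :=
        (Finset.mul_prod_erase Finset.univ _ (Finset.mem_univ l)).symm
      rw [hfac, mul_comm ((x : R) ^ n - y l), mul_smul, sub_smul, hy l, sub_self, smul_zero]
    | zero => rw [smul_zero]
    | add m1 m2 _ _ h1 h2 => rw [smul_add, h1, h2, add_zero]
    | smul r m _ h1 => rw [smul_comm, h1, smul_zero]
  -- now conclude
  have hKmem : (x : R) ^ (n * t) ∈ F ((t : ℤ) * e) := by
    have := pow_mem_fil hF hxn t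
    rwa [← pow_mul] at this
  have hsplit : re.emb ((t : ℤ) * e) ⟨(x : R) ^ (n * t), hKmem⟩ =
      re.emb ((t : ℤ) * e) ⟨z, hzF⟩ := by
    have hsum : (⟨(x : R) ^ (n * t), hKmem⟩ : F ((t : ℤ) * e)) =
        ⟨z, hzF⟩ + ⟨(x : R) ^ (n * t) - z, fil_mono hF.mono (by omega) hdiff⟩ := by
      apply Subtype.ext
      simp
    rw [hsum, map_add]
    have h0 : re.emb ((t : ℤ) * e)
        ⟨(x : R) ^ (n * t) - z, fil_mono hF.mono (by omega) hdiff⟩ = 0 :=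
      (re.emb_eq_zero_iff _ _).mpr (by simpa using hdiff)
    rw [h0, add_zero]
  have hpow : (re.emb d x) ^ (n * t) = re.emb ((t : ℤ) * e) ⟨z, hzF⟩ := by
    rw [emb_pow hF re x (n * t)]
    rw [← hsplit]
    exact emb_congr re (by push_cast [he]; ring) rfl _ _
  refine ⟨n * t, ?_⟩
  rw [hpow]
  exact Ideal.subset_span ⟨(t : ℤ) * e, ⟨z, hzF⟩, hzann, rfl⟩

end Statement9Aux

open FilteredPaper Statement9Aux in
/-- let `R` be commutative with a filtration `𝓡` inducing good filtrations
on all submodules and quotients of `R`, and let `M` be finitely generated with an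
`𝓡`-filtration `𝓜` inducing good filtrations on all submodules and quotients of `M`.
Then `√(Gr(0:𝓜)) = √(0 : Gr𝓜)` as ideals of `Gr𝓡` (realizations `A` of `Gr𝓡` and `G`
of `Gr𝓜`). -/
theorem statement_9 (R : Type) [CommRing R] (F : ℤ → AddSubgroup R)
    (hF : IsRingFiltration F)
    (hRsub : ∀ I : Ideal R, InducedGoodOn F F I)
    (hRquot : ∀ I : Ideal R, IsGoodFiltration F (quotFil F I))
    (M : Type) [AddCommGroup M] [Module R M] [Module.Finite R M]
    (FM : ℤ → AddSubgroup M) (hFM : IsModuleFiltration F FM)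
    (hMsub : ∀ N : Submodule R M, InducedGoodOn F FM N)
    (hMquot : ∀ N : Submodule R M, IsGoodFiltration F (quotFil FM N))
    (A : Type) [CommRing A] (re : GrRingReal F A)
    (G : Type) [AddCommGroup G] [Module A G] (reM : GrModuleReal F FM re G) :
    (grIdealOf re (Module.annihilator R M : Set R)).radical =
      (Module.annihilator A G).radical := by
  apply le_antisymm
  · -- easy direction: Gr(0:M) ⊆ Ann G
    refine Ideal.radical_mono ?_
    rw [grIdealOf]
    refine Ideal.span_le.mpr ?_
    rintro a ⟨i, x, hxann, rfl⟩
    refine SetLike.mem_coe.mpr (ann_of_homog_killing reM _ (fun j m => ?_))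
    have h0 : (x : R) • (m : M) ∈ FM (i + j) := hFM.smul_mem x.2 m.2
    rw [reM.emb_smul i j x m h0]
    have hxm : (x : R) • (m : M) = 0 :=
      Module.mem_annihilator.mp (SetLike.mem_coe.mp hxann) (m : M)
    have h1 : (⟨(x : R) • (m : M), h0⟩ : FM (i + j)) = 0 := Subtype.ext hxm
    rw [h1, map_zero]
  · -- hard direction: Ann G ⊆ √Gr(0:M)
    have hann_le : Module.annihilator A G ≤
        (grIdealOf re (Module.annihilator R M : Set R)).radical := by
      intro a ha
      obtain ⟨s, f, hf, rfl⟩ := internal_decompose re.internal a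
      refine Ideal.sum_mem _ (fun i hi => ?_)
      obtain ⟨x, hxeq⟩ := hf i
      -- each homogeneous component annihilates each homogeneous element of G
      have hcomp : ∀ (j : ℤ) (m : FM j), f i • reM.emb j m = 0 := by
        intro j m
        have h0 : ∑ k ∈ s, f k • reM.emb j m = 0 := by
          rw [← Finset.sum_smul]
          exact Module.mem_annihilator.mp ha (reM.emb j m)
        refine internal_sum_eq_zero reM.internal s (fun k => k + j)
          (add_left_injective j) (fun k => f k • reM.emb j m) ?_ h0 i hi
        intro k
        show f k • reM.emb j m ∈ (reM.emb (k + j)).range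
        obtain ⟨xk, hxk⟩ := hf k
        rw [← hxk, reM.emb_smul k j xk m (hFM.smul_mem xk.2 m.2)]
        exact ⟨_, rfl⟩
      -- translate to the filtration-lowering property of x
      have hx : ∀ (j : ℤ) (m : M), m ∈ FM j → (x : R) • m ∈ FM (j + i - 1) := by
        intro j m hm
        have h1 : (x : R) • m ∈ FM (i + j) := hFM.smul_mem x.2 hm
        have h2 : re.emb i x • reM.emb j ⟨m, hm⟩ = reM.emb (i + j) ⟨(x : R) • m, h1⟩ :=
          reM.emb_smul i j x ⟨m, hm⟩ h1
        have h3 : reM.emb (i + j) ⟨(x : R) • m, h1⟩ = 0 := by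
          rw [← h2, hxeq]
          exact hcomp j ⟨m, hm⟩
        have h4 := (reM.emb_eq_zero_iff _ _).mp h3
        have h5 : i + j - 1 = j + i - 1 := by ring
        rw [h5] at h4
        exact h4
      rw [← hxeq]
      exact homog_case hF hFM hMsub re x hx
    calc (Module.annihilator A G).radical
        ≤ ((grIdealOf re (Module.annihilator R M : Set R)).radical).radical :=
          Ideal.radical_mono hann_le
      _ = (grIdealOf re (Module.annihilator R M : Set R)).radical :=
          Ideal.radical_idem _
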